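/- Let h(x) = x² and B_m = {(x,y) ∈ ℤ×ℤ : |x| ≤ m and |y| ≤ h(m−|x|)} with inner boundary ∂B_m. Then for every m ≥ 1 the harmonic measure ν_{m,o} of B_m is the uniform measure on ∂B_m; equivalently, for every z ∈ ∂B_m, every function ψ : B_m → ℝ that is harmonic at every vertex of B_m∖∂B_m and satisfies ψ(z) = 1 and ψ(w) = 0 for all w ∈ ∂B_m∖{z} has ψ(o) = 1/|∂B_m|. -/

import Mathlib

/-!
For `h x = x²` and `B_m = {(x,y) : |x| ≤ m ∧ |y| ≤ h (m - |x|)}` in the comb `C₂`,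
the harmonic measure of `B_m` seen from the origin is uniform on the inner
boundary `∂B_m`: any function harmonic on `B_m ∖ ∂B_m` with boundary values
`δ_z` has value `1/|∂B_m|` at the origin.
-/

namespace Stmt1

/-- Vertices of the comb `C₂`. -/
abbrev V := ℤ × ℤ

/-- The origin of the comb. -/
def o : V := (0, 0)

/-- The neighbours in `C₂` of a vertex: a backbone vertex `(x,0)` has the four
neighbours `(x±1,0)`, `(x,±1)`; a vertex `(x,y)` with `y ≠ 0` has the two
neighbours `(x,y±1)`. -/
def nbrs (v : V) : Finset V :=
  if v.2 = 0 then {(v.1 + 1, 0), (v.1 - 1, 0), (v.1, 1), (v.1, -1)}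
  else {(v.1, v.2 + 1), (v.1, v.2 - 1)}

/-- The set `B_m = {(x,y) ∈ ℤ×ℤ : |x| ≤ m, |y| ≤ h(m - |x|)}`, as a `Finset`. -/
noncomputable def Bfin (h : ℕ → ℕ) (m : ℕ) : Finset V :=
  ((Finset.Icc (-(m : ℤ)) (m : ℤ)) ×ˢ
      (Finset.Icc (-(((Finset.range (m + 1)).sup h : ℕ) : ℤ))
        (((Finset.range (m + 1)).sup h : ℕ) : ℤ))).filter
    (fun p => p.2.natAbs ≤ h (m - p.1.natAbs))

/-- The inner boundary `∂B_m`: points of `B_m` with a `C₂`-neighbour outside `B_m`. -/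
noncomputable def bdry (h : ℕ → ℕ) (m : ℕ) : Finset V :=
  (Bfin h m).filter (fun z => ∃ y ∈ nbrs z, y ∉ Bfin h m)

/-- `ψ` is harmonic (for simple random walk on `C₂`) at the vertex `v`:
the sum of `ψ` over the neighbours of `v` equals `deg v · ψ v`. -/
def HarmAt (ψ : V → ℝ) (v : V) : Prop :=
  ∑ y ∈ nbrs v, ψ y = ((nbrs v).card : ℝ) * ψ v

/-- `h x = x²`. -/
def sq (x : ℕ) : ℕ := x ^ 2

lemma sup_sq (m : ℕ) : (Finset.range (m + 1)).sup sq = m ^ 2 := by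
  apply le_antisymm
  · exact Finset.sup_le fun k hk => Nat.pow_le_pow_left (by
      simpa [Nat.lt_succ_iff] using Finset.mem_range.mp hk) 2
  · exact Finset.le_sup (f := sq) (Finset.mem_range.mpr (Nat.lt_succ_self m))

lemma mem_Bfin {m : ℕ} {p : V} :
    p ∈ Bfin sq m ↔ p.1.natAbs ≤ m ∧ p.2.natAbs ≤ (m - p.1.natAbs) ^ 2 := by
  constructor
  · intro hp
    obtain ⟨hmem, hcond⟩ := Finset.mem_filter.mp hp
    obtain ⟨h1, _⟩ := Finset.mem_product.mp hmem
    rw [Finset.mem_Icc] at h1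
    exact ⟨by omega, hcond⟩
  · rintro ⟨h1, h2⟩
    refine Finset.mem_filter.mpr ⟨Finset.mem_product.mpr ⟨?_, ?_⟩, h2⟩
    · rw [Finset.mem_Icc]; omega
    · rw [Finset.mem_Icc, sup_sq]
      have : (m - p.1.natAbs) ^ 2 ≤ m ^ 2 := Nat.pow_le_pow_left (by omega) 2
      omega

lemma nbrs_symm {u v : V} : u ∈ nbrs v ↔ v ∈ nbrs u := by
  obtain ⟨a, b⟩ := u; obtain ⟨x, y⟩ := v
  simp only [nbrs]
  split_ifs with h1 h2 h2 <;>
    simp only [Finset.mem_insert, Finset.mem_singleton, Prod.mk.injEq] <;> omega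

lemma card_nbrs (v : V) : (nbrs v).card = if v.2 = 0 then 4 else 2 := by
  obtain ⟨x, y⟩ := v
  simp only [nbrs]
  split_ifs with h
  · rw [show ((4:ℕ) = 4) from rfl]
    rw [Finset.card_insert_of_notMem, Finset.card_insert_of_notMem,
      Finset.card_insert_of_notMem, Finset.card_singleton] <;>
      simp only [Finset.mem_insert, Finset.mem_singleton, Prod.mk.injEq, not_or] <;>
      omega
  · rw [Finset.card_insert_of_notMem, Finset.card_singleton]
    simp only [Finset.mem_singleton, Prod.mk.injEq]
    omega

lemma sum_nbrs_backbone {M : Type*} [AddCommMonoid M] (f : V → M) (x : ℤ) :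
    ∑ y ∈ nbrs (x, 0), f y = f (x+1, 0) + f (x-1, 0) + f (x, 1) + f (x, -1) := by
  have h1 : ((x+1, (0:ℤ)) : V) ∉ ({(x - 1, 0), (x, 1), (x, -1)} : Finset V) := by
    simp only [Finset.mem_insert, Finset.mem_singleton, Prod.mk.injEq, not_or]; omega
  have h2 : ((x-1, (0:ℤ)) : V) ∉ ({(x, 1), (x, -1)} : Finset V) := by
    simp only [Finset.mem_insert, Finset.mem_singleton, Prod.mk.injEq, not_or]; omega
  have h3 : ((x, (1:ℤ)) : V) ∉ ({(x, -1)} : Finset V) := by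
    simp only [Finset.mem_singleton, Prod.mk.injEq, not_and]; omega
  simp only [nbrs, ite_true, eq_self_iff_true]
  rw [Finset.sum_insert h1, Finset.sum_insert h2, Finset.sum_insert h3,
    Finset.sum_singleton, add_assoc, add_assoc]

lemma sum_nbrs_tooth {M : Type*} [AddCommMonoid M] (f : V → M) (x y : ℤ) (hy : y ≠ 0) :
    ∑ w ∈ nbrs (x, y), f w = f (x, y+1) + f (x, y-1) := by
  simp only [nbrs, if_neg hy]
  rw [Finset.sum_insert, Finset.sum_singleton]
  simp only [Finset.mem_singleton, Prod.mk.injEq]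
  omega

lemma mem_bdry_iff {m : ℕ} (hm : 1 ≤ m) {x y : ℤ} :
    (x, y) ∈ bdry sq m ↔
      (y = 0 ∧ x.natAbs = m) ∨ (x.natAbs < m ∧ y.natAbs = (m - x.natAbs) ^ 2) := by
  have hs1 : x.natAbs < m → 1 ≤ (m - x.natAbs) ^ 2 := fun h =>
    Nat.one_le_pow _ _ (by omega)
  constructor
  · intro h
    obtain ⟨hB, w, hw, hwB⟩ := Finset.mem_filter.mp h
    rw [mem_Bfin] at hB
    have hB1 : x.natAbs ≤ m := hB.1
    have hB2 : y.natAbs ≤ (m - x.natAbs) ^ 2 := hB.2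
    clear hB
    by_cases hy : y = 0
    · subst hy
      left
      refine ⟨rfl, ?_⟩
      simp only [nbrs, ite_true, Finset.mem_insert, Finset.mem_singleton] at hw
      rcases hw with hw | hw | hw | hw <;> subst hw <;> rw [mem_Bfin] at hwB <;>
        simp only [not_and, not_le] at hwB
      · have h0 : (0:ℤ).natAbs ≤ (m - (x+1).natAbs)^2 := Nat.zero_le _
        omega
      · have h0 : (0:ℤ).natAbs ≤ (m - (x-1).natAbs)^2 := Nat.zero_le _
        omega
      · have := hwB; omega
      · have := hwB; omega
    · right
      have hb1 : 1 ≤ y.natAbs := by omega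
      have hxm : x.natAbs < m := by
        by_contra hc
        have : m - x.natAbs = 0 := by omega
        rw [this] at hB2; simp at hB2; omega
      refine ⟨hxm, ?_⟩
      simp only [nbrs, if_neg hy, Finset.mem_insert, Finset.mem_singleton] at hw
      rcases hw with hw | hw <;> subst hw <;> rw [mem_Bfin] at hwB <;>
        simp only [not_and, not_le] at hwB <;> omega
  · rintro (⟨hy, hx⟩ | ⟨hx, hy⟩)
    · subst hy
      refine Finset.mem_filter.mpr ⟨mem_Bfin.mpr ⟨by omega, Nat.zero_le _⟩, (x, 1), ?_, ?_⟩
      · simp [nbrs]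
      · rw [mem_Bfin]
        simp only [not_and, not_le]
        intro _
        have : m - x.natAbs = 0 := by omega
        rw [this]; simp
    · have hyne : y ≠ 0 := by
        intro h; rw [h] at hy; simp at hy
        have := hs1 hx; omega
      refine Finset.mem_filter.mpr ⟨mem_Bfin.mpr ⟨hx.le, le_of_eq hy⟩,
        (if 0 < y then (x, y+1) else (x, y-1)), ?_, ?_⟩
      · simp only [nbrs, if_neg hyne, Finset.mem_insert, Finset.mem_singleton]
        split_ifs <;> simp
      · split_ifs with h0 <;> rw [mem_Bfin] <;>
          simp only [not_and, not_le, Prod.fst, Prod.snd] <;> intro _ <;> omega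
/-- Integer Green-type coefficients. -/
def cI (m : ℕ) (v : V) : ℤ :=
  if |v.1| ≤ (m : ℤ) - 1 ∧ |v.2| ≤ ((m : ℤ) - |v.1|) ^ 2 - 1
  then |v.2| - ((m : ℤ) - |v.1|) ^ 2 else 0

lemma cI_negx (m : ℕ) (x y : ℤ) : cI m (-x, y) = cI m (x, y) := by
  simp [cI, abs_neg]

lemma cI_negy (m : ℕ) (x y : ℤ) : cI m (x, -y) = cI m (x, y) := by
  simp [cI, abs_neg]

/-- ℤ-abs version of the boundary characterization. -/
lemma mem_bdry_iff' {m : ℕ} (hm : 1 ≤ m) {x y : ℤ} :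
    (x, y) ∈ bdry sq m ↔
      (y = 0 ∧ |x| = (m : ℤ)) ∨ (|x| < (m : ℤ) ∧ |y| = ((m : ℤ) - |x|) ^ 2) := by
  rw [mem_bdry_iff hm]
  have hx : |x| = (x.natAbs : ℤ) := Int.abs_eq_natAbs x
  have hy : |y| = (y.natAbs : ℤ) := Int.abs_eq_natAbs y
  constructor
  · rintro (⟨h1, h2⟩ | ⟨h1, h2⟩)
    · exact Or.inl ⟨h1, by omega⟩
    · refine Or.inr ⟨by omega, ?_⟩
      have hc : ((m - x.natAbs : ℕ) : ℤ) = (m : ℤ) - |x| := by omega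
      rw [hy, h2]; push_cast [← hc]; ring
  · rintro (⟨h1, h2⟩ | ⟨h1, h2⟩)
    · exact Or.inl ⟨h1, by omega⟩
    · refine Or.inr ⟨by omega, ?_⟩
      have hc : ((m - x.natAbs : ℕ) : ℤ) = (m : ℤ) - |x| := by omega
      have : ((y.natAbs : ℤ)) = (((m - x.natAbs : ℕ) : ℤ)) ^ 2 := by
        rw [← hy, h2, hc]
      exact_mod_cast this

lemma cI_x0 (m : ℕ) {x : ℤ} (hx : 0 ≤ x) :
    cI m (x, 0) = if x ≤ (m : ℤ) - 1 then -((m : ℤ) - x) ^ 2 else 0 := by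
  unfold cI
  simp only [abs_zero, abs_of_nonneg hx]
  by_cases h : x ≤ (m : ℤ) - 1
  · rw [if_pos ⟨h, by nlinarith⟩, if_pos h]; ring
  · rw [if_neg (by rintro ⟨h1, _⟩; exact h h1), if_neg h]

lemma cI_x1 (m : ℕ) {x : ℤ} (hx : 0 ≤ x) {y : ℤ} (hy : |y| = 1) :
    cI m (x, y) = if x ≤ (m : ℤ) - 2 then 1 - ((m : ℤ) - x) ^ 2 else 0 := by
  unfold cI
  simp only [abs_of_nonneg hx, hy]
  by_cases h : x ≤ (m : ℤ) - 2
  · rw [if_pos ⟨by omega, by nlinarith⟩, if_pos h]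
  · rw [if_neg ?_, if_neg h]
    rintro ⟨h1, h2⟩
    have he : (m : ℤ) - x = 1 := by omega
    rw [he] at h2; norm_num at h2

/-- The key pointwise identity for backbone vertices with `x ≥ 0`. -/
lemma Tint_backbone_nonneg {m : ℕ} (hm : 1 ≤ m) {x : ℤ} (hx : 0 ≤ x) :
    cI m (x+1, 0) + cI m (x-1, 0) + cI m (x, 1) + cI m (x, -1) - 4 * cI m (x, 0)
      = (if ((x : ℤ), (0 : ℤ)) = o then 4*(m : ℤ) else 0)
        - (if ((x : ℤ), (0 : ℤ)) ∈ bdry sq m then 1 else 0) := by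
  have hm' : (1 : ℤ) ≤ (m : ℤ) := by exact_mod_cast hm
  rcases eq_or_lt_of_le hx with h0 | hpos
  · -- x = 0
    subst h0
    have hno : (((0 : ℤ), (0 : ℤ)) : V) = o := rfl
    have hnb : (((0 : ℤ), (0 : ℤ)) : V) ∉ bdry sq m := by
      rw [mem_bdry_iff' hm]
      rintro (⟨_, h⟩ | ⟨_, h⟩) <;> simp only [abs_zero] at h
      · omega
      · nlinarith
    rw [if_pos hno, if_neg hnb]
    simp only [zero_add, zero_sub]
    rw [cI_negx, cI_negy, cI_x0 m (show (0:ℤ) ≤ 1 by norm_num),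
      cI_x1 m le_rfl abs_one, cI_x0 m le_rfl]
    by_cases h2 : (1 : ℤ) ≤ (m : ℤ) - 1
    · rw [if_pos h2, if_pos (by omega), if_pos (by omega)]; ring
    · rw [if_neg h2, if_neg (by omega), if_pos (by omega)]
      have hm1 : (m : ℤ) = 1 := by omega
      rw [hm1]; norm_num
  · -- x ≥ 1
    have hxo : (((x : ℤ), (0 : ℤ)) : V) ≠ o := by
      intro h
      have : x = 0 := congrArg Prod.fst h
      omega
    have hbd : ((((x : ℤ), (0 : ℤ)) : V) ∈ bdry sq m) ↔ x = (m : ℤ) := by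
      rw [mem_bdry_iff' hm, abs_of_nonneg hx, abs_zero]
      constructor
      · rintro (⟨_, h⟩ | ⟨h1, h2⟩)
        · exact h
        · exfalso; nlinarith
      · intro h; exact Or.inl ⟨rfl, h⟩
    rw [if_neg hxo]
    rw [cI_x0 m (by omega : (0:ℤ) ≤ x + 1), cI_x0 m (by omega : (0:ℤ) ≤ x - 1),
      cI_x1 m hx (abs_one), cI_x1 m hx (by norm_num : |(-1 : ℤ)| = 1), cI_x0 m hx]
    by_cases hxm : x = (m : ℤ)
    · rw [if_pos (hbd.mpr hxm), if_neg (by omega), if_pos (by omega),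
        if_neg (by omega), if_neg (by omega)]
      subst hxm; ring
    · rw [if_neg (fun h => hxm (hbd.mp h))]
      by_cases h1 : x ≤ (m : ℤ) - 2
      · rw [if_pos (by omega), if_pos (by omega), if_pos h1, if_pos (by omega)]
        ring
      · by_cases h2 : x = (m : ℤ) - 1
        · rw [if_neg (by omega), if_pos (by omega), if_neg h1, if_pos (by omega)]
          subst h2; ring
        · rw [if_neg (by omega), if_neg (by omega), if_neg h1, if_neg (by omega)]
          ring

/-- The key pointwise identity for tooth vertices with `y ≥ 1`. -/
lemma Tint_tooth_pos {m : ℕ} (hm : 1 ≤ m) (x : ℤ) {y : ℤ} (hy : 1 ≤ y) :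
    cI m (x, y+1) + cI m (x, y-1) - 2 * cI m (x, y)
      = - (if ((x : ℤ), y) ∈ bdry sq m then 1 else 0) := by
  have hm' : (1 : ℤ) ≤ (m : ℤ) := by exact_mod_cast hm
  have ha : 0 ≤ |x| := abs_nonneg x
  have e1 : |y+1| = y+1 := abs_of_nonneg (by omega)
  have e2 : |y-1| = y-1 := abs_of_nonneg (by omega)
  have e3 : |y| = y := abs_of_nonneg (by omega)
  have hs1 : |x| ≤ (m:ℤ) - 1 → 1 ≤ ((m:ℤ) - |x|) ^ 2 := fun h => by nlinarith
  have hbd : ((((x : ℤ), y) : V) ∈ bdry sq m) ↔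
      (|x| ≤ (m:ℤ) - 1 ∧ y = ((m:ℤ) - |x|) ^ 2) := by
    rw [mem_bdry_iff' hm]
    constructor
    · rintro (⟨h1, _⟩ | ⟨h1, h2⟩)
      · omega
      · exact ⟨by omega, by rw [← e3]; exact h2⟩
    · rintro ⟨h1, h2⟩
      exact Or.inr ⟨by omega, by rw [e3]; exact h2⟩
  unfold cI
  simp only [e1, e2, e3]
  by_cases hxa : |x| ≤ (m:ℤ) - 1
  · have hs1' := hs1 hxa
    by_cases hc : y ≤ ((m:ℤ) - |x|) ^ 2 - 2
    · rw [if_pos ⟨hxa, by omega⟩, if_pos ⟨hxa, by omega⟩, if_pos ⟨hxa, by omega⟩,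
        if_neg (fun h => by have := (hbd.mp h).2; omega)]
      ring
    · by_cases hc2 : y = ((m:ℤ) - |x|) ^ 2 - 1
      · rw [if_neg (fun h : _ ∧ _ => by omega), if_pos ⟨hxa, by omega⟩,
          if_pos ⟨hxa, by omega⟩, if_neg (fun h => by have := (hbd.mp h).2; omega)]
        omega
      · by_cases hc3 : y = ((m:ℤ) - |x|) ^ 2
        · rw [if_neg (fun h : _ ∧ _ => by omega), if_pos ⟨hxa, by omega⟩,
            if_neg (fun h : _ ∧ _ => by omega), if_pos (hbd.mpr ⟨hxa, hc3⟩)]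
          omega
        · rw [if_neg (fun h : _ ∧ _ => by omega), if_neg (fun h : _ ∧ _ => by omega),
            if_neg (fun h : _ ∧ _ => by omega),
            if_neg (fun h => by have := (hbd.mp h).2; omega)]
          norm_num
  · rw [if_neg (fun h : _ ∧ _ => hxa h.1), if_neg (fun h : _ ∧ _ => hxa h.1),
      if_neg (fun h : _ ∧ _ => hxa h.1), if_neg (fun h => hxa (hbd.mp h).1)]
    norm_num

/-- The key pointwise identity, all vertices. -/
lemma Tint {m : ℕ} (hm : 1 ≤ m) (v : V) :
    (∑ w ∈ nbrs v, cI m w) - ((nbrs v).card : ℤ) * cI m v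
      = (if v = o then 4*(m:ℤ) else 0) - (if v ∈ bdry sq m then 1 else 0) := by
  obtain ⟨x, y⟩ := v
  by_cases hy : y = 0
  · subst hy
    have hc : (((nbrs ((x : ℤ), (0 : ℤ))).card : ℤ)) = 4 := by
      rw [card_nbrs]; norm_num
    rw [sum_nbrs_backbone (cI m) x, hc]
    rcases le_or_gt 0 x with hx | hx
    · exact Tint_backbone_nonneg hm hx
    · have h := Tint_backbone_nonneg hm (by omega : (0:ℤ) ≤ -x)
      rw [show (-x+1 : ℤ) = -(x-1) by ring, show (-x-1 : ℤ) = -(x+1) by ring] at h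
      simp only [cI_negx, cI_negy] at h
      have h1 : ((-x, (0:ℤ)) : V) ≠ o := by
        intro hh; have : -x = 0 := congrArg Prod.fst hh; omega
      have h2 : ((x, (0:ℤ)) : V) ≠ o := by
        intro hh; have : x = 0 := congrArg Prod.fst hh; omega
      have hb : (((-x, (0:ℤ)) : V) ∈ bdry sq m) ↔ (((x, (0:ℤ)) : V) ∈ bdry sq m) := by
        rw [mem_bdry_iff' hm, mem_bdry_iff' hm, abs_neg]
      rw [if_neg h1] at h
      simp only [hb] at h
      rw [if_neg h2]
      simp only [cI_negy]
      linarith [h]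
  · have hc : (((nbrs ((x : ℤ), y)).card : ℤ)) = 2 := by
      rw [card_nbrs]; simp [hy]
    have h2 : ((x, y) : V) ≠ o := by
      intro hh; have : y = 0 := congrArg Prod.snd hh; exact hy this
    rw [sum_nbrs_tooth (cI m) x y hy, hc, if_neg h2]
    rcases le_or_gt 1 y with hy1 | hy1
    · have h := Tint_tooth_pos hm x hy1
      linarith [h]
    · have hy1' : 1 ≤ -y := by omega
      have h := Tint_tooth_pos hm x hy1'
      rw [show (-y+1 : ℤ) = -(y-1) by ring, show (-y-1 : ℤ) = -(y+1) by ring] at h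
      simp only [cI_negy] at h
      have hb : (((x, -y) : V) ∈ bdry sq m) ↔ (((x, y) : V) ∈ bdry sq m) := by
        rw [mem_bdry_iff' hm, mem_bdry_iff' hm, abs_neg, neg_eq_zero]
      simp only [hb] at h
      linarith [h]

/-- Real Green coefficients. -/
noncomputable def cR (m : ℕ) (v : V) : ℝ := (cI m v : ℝ) / (4*m)

lemma Treal {m : ℕ} (hm : 1 ≤ m) (v : V) :
    (∑ w ∈ nbrs v, cR m w) - ((nbrs v).card : ℝ) * cR m v
      = (if v = o then 1 else 0) - (if v ∈ bdry sq m then 1/(4*(m:ℝ)) else 0) := by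
  have hm0 : (0:ℝ) < (m:ℝ) := by exact_mod_cast hm
  have h4 : (4*(m:ℝ)) ≠ 0 := by positivity
  have h := Tint hm v
  have e : (∑ w ∈ nbrs v, cR m w) - ((nbrs v).card : ℝ) * cR m v
      = (((∑ w ∈ nbrs v, cI m w) - ((nbrs v).card : ℤ) * cI m v : ℤ) : ℝ) / (4*(m:ℝ)) := by
    unfold cR
    push_cast
    rw [sub_div, Finset.sum_div, mul_div_assoc]
  rw [e, h]
  split_ifs <;> push_cast <;> field_simp <;> ring

noncomputable def Rset (m : ℕ) : Finset V :=
  (Finset.Icc (-(m:ℤ)-1) ((m:ℤ)+1)) ×ˢ (Finset.Icc (-((m:ℤ)^2)-1) ((m:ℤ)^2+1))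

lemma coord_bound {m : ℕ} {p : V} (hp : p ∈ Bfin sq m) :
    p.1.natAbs ≤ m ∧ p.2.natAbs ≤ m^2 := by
  obtain ⟨h1, h2⟩ := mem_Bfin.mp hp
  have : (m - p.1.natAbs)^2 ≤ m^2 := Nat.pow_le_pow_left (by omega) 2
  exact ⟨h1, by omega⟩

lemma B_sub_R {m : ℕ} : Bfin sq m ⊆ Rset m := by
  intro p hp
  obtain ⟨h1, h2⟩ := coord_bound hp
  have hc : ((m^2 : ℕ) : ℤ) = (m:ℤ)^2 := by push_cast; ring
  refine Finset.mem_product.mpr ⟨Finset.mem_Icc.mpr ⟨by omega, by omega⟩,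
    Finset.mem_Icc.mpr ⟨by omega, by omega⟩⟩

lemma nbrs_coord {v w : V} (h : w ∈ nbrs v) :
    (v.1 - 1 ≤ w.1 ∧ w.1 ≤ v.1 + 1) ∧ (v.2 - 1 ≤ w.2 ∧ w.2 ≤ v.2 + 1) := by
  obtain ⟨a, b⟩ := w; obtain ⟨c, d⟩ := v
  simp only [nbrs] at h
  split_ifs at h with h0 <;>
    simp only [Finset.mem_insert, Finset.mem_singleton, Prod.mk.injEq] at h <;> omega

lemma nbrs_sub_R {m : ℕ} {v : V} (hv : v ∈ Bfin sq m) : nbrs v ⊆ Rset m := by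
  intro w hw
  obtain ⟨h1, h2⟩ := coord_bound hv
  obtain ⟨⟨a1, a2⟩, b1, b2⟩ := nbrs_coord hw
  have hc : ((m^2 : ℕ) : ℤ) = (m:ℤ)^2 := by push_cast; ring
  refine Finset.mem_product.mpr ⟨Finset.mem_Icc.mpr ⟨by omega, by omega⟩,
    Finset.mem_Icc.mpr ⟨by omega, by omega⟩⟩

lemma int_of_cI_ne {m : ℕ} (hm : 1 ≤ m) {v : V} (h : cI m v ≠ 0) :
    v ∈ Bfin sq m ∧ v ∉ bdry sq m := by
  obtain ⟨x, y⟩ := v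
  unfold cI at h
  by_cases hcond : |x| ≤ (m:ℤ) - 1 ∧ |y| ≤ ((m:ℤ) - |x|)^2 - 1
  · obtain ⟨h1, h2⟩ := hcond
    have hax : |x| = (x.natAbs : ℤ) := Int.abs_eq_natAbs x
    have hay : |y| = (y.natAbs : ℤ) := Int.abs_eq_natAbs y
    have hc : ((m - x.natAbs : ℕ) : ℤ) = (m:ℤ) - |x| := by omega
    have hsq : (((m - x.natAbs)^2 : ℕ) : ℤ) = ((m:ℤ) - |x|)^2 := by
      rw [← hc]; push_cast; ring
    have h2' : (y.natAbs : ℤ) ≤ ((((m - x.natAbs)^2 : ℕ)) : ℤ) - 1 := by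
      rw [hsq, ← hay]; exact h2
    constructor
    · refine mem_Bfin.mpr ⟨by omega, ?_⟩
      show y.natAbs ≤ (m - x.natAbs)^2
      omega
    · rw [mem_bdry_iff' hm]
      rintro (⟨_, hx⟩ | ⟨_, hy2⟩)
      · omega
      · rw [← hsq] at hy2
        omega
  · exact absurd (if_neg hcond) h

lemma cR_ne_imp {m : ℕ} (hm : 1 ≤ m) {v : V} (h : cR m v ≠ 0) :
    v ∈ Bfin sq m ∧ v ∉ bdry sq m := by
  apply int_of_cI_ne hm
  intro h0
  exact h (by simp [cR, h0])

lemma key {m : ℕ} (hm : 1 ≤ m) (ψ : V → ℝ)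
    (hharm : ∀ v ∈ Bfin sq m, v ∉ bdry sq m → HarmAt ψ v) :
    ψ o = (1/(4*(m:ℝ))) * ∑ w ∈ bdry sq m, ψ w := by
  have hm0 : (0:ℝ) < (m:ℝ) := by exact_mod_cast hm
  have hBR : Bfin sq m ⊆ Rset m := B_sub_R
  have hbR : bdry sq m ⊆ Rset m := fun w hw => hBR (Finset.mem_filter.mp hw).1
  -- step 1 : the weighted sum of Laplacians vanishes
  have h0 : ∑ v ∈ Rset m, cR m v * ((∑ w ∈ nbrs v, ψ w) - ((nbrs v).card : ℝ) * ψ v)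
      = 0 := by
    refine Finset.sum_eq_zero fun v hv => ?_
    by_cases hcv : cR m v = 0
    · rw [hcv, zero_mul]
    · obtain ⟨hvB, hvb⟩ := cR_ne_imp hm hcv
      have := hharm v hvB hvb
      unfold HarmAt at this
      rw [this, sub_self, mul_zero]
  -- step 2 : summation by parts (symmetry of the adjacency relation)
  have h1 : ∑ v ∈ Rset m, cR m v * ((∑ w ∈ nbrs v, ψ w) - ((nbrs v).card : ℝ) * ψ v)
      = ∑ v ∈ Rset m, ψ v * ((∑ w ∈ nbrs v, cR m w) - ((nbrs v).card : ℝ) * cR m v) := by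
    have swap1 : ∑ v ∈ Rset m, cR m v * (∑ w ∈ nbrs v, ψ w)
        = ∑ v ∈ Rset m, ψ v * (∑ w ∈ nbrs v, cR m w) := by
      have lhs_eq : ∀ v ∈ Rset m, cR m v * (∑ w ∈ nbrs v, ψ w)
          = ∑ w ∈ Rset m, if w ∈ nbrs v then cR m v * ψ w else 0 := by
        intro v hv
        by_cases hcv : cR m v = 0
        · simp [hcv]
        · obtain ⟨hvB, _⟩ := cR_ne_imp hm hcv
          rw [Finset.sum_ite_mem, Finset.inter_eq_right.mpr (nbrs_sub_R hvB),
            Finset.mul_sum]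
      have rhs_eq : ∀ v ∈ Rset m, ψ v * (∑ w ∈ nbrs v, cR m w)
          = ∑ w ∈ Rset m, if w ∈ nbrs v then ψ v * cR m w else 0 := by
        intro v hv
        rw [Finset.sum_ite_mem, Finset.mul_sum]
        refine (Finset.sum_subset Finset.inter_subset_right fun w hw hw' => ?_).symm
        have : w ∉ Rset m := fun hR => hw' (Finset.mem_inter.mpr ⟨hR, hw⟩)
        have hcw : cR m w = 0 := by
          by_contra hne
          exact this (hBR (cR_ne_imp hm hne).1)
        rw [hcw, mul_zero]
      rw [Finset.sum_congr rfl lhs_eq, Finset.sum_congr rfl rhs_eq, Finset.sum_comm]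
      refine Finset.sum_congr rfl fun v _ => Finset.sum_congr rfl fun w _ => ?_
      by_cases hvw : w ∈ nbrs v
      · rw [if_pos (nbrs_symm.mpr hvw), if_pos hvw, mul_comm]
      · rw [if_neg (fun hc => hvw (nbrs_symm.mp hc)), if_neg hvw]
    simp only [mul_sub]
    rw [Finset.sum_sub_distrib, Finset.sum_sub_distrib, swap1]
    congr 1
    refine Finset.sum_congr rfl fun v _ => by ring
  -- step 3 : evaluate using the pointwise identity
  have h2 : ∑ v ∈ Rset m, ψ v * ((∑ w ∈ nbrs v, cR m w) - ((nbrs v).card : ℝ) * cR m v)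
      = ψ o - (1/(4*(m:ℝ))) * ∑ w ∈ bdry sq m, ψ w := by
    have := fun v => Treal hm v
    calc ∑ v ∈ Rset m, ψ v * ((∑ w ∈ nbrs v, cR m w) - ((nbrs v).card : ℝ) * cR m v)
        = ∑ v ∈ Rset m, ((if v = o then ψ v else 0)
            - (if v ∈ bdry sq m then ψ v * (1/(4*(m:ℝ))) else 0)) := by
          refine Finset.sum_congr rfl fun v _ => ?_
          rw [Treal hm v, mul_sub]
          congr 1 <;> by_cases h : v = o <;> by_cases h' : v ∈ bdry sq m <;>
            simp [h, h']
      _ = (∑ v ∈ Rset m, if v = o then ψ v else 0)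
            - ∑ v ∈ Rset m, (if v ∈ bdry sq m then ψ v * (1/(4*(m:ℝ))) else 0) :=
          Finset.sum_sub_distrib _ _
      _ = ψ o - (1/(4*(m:ℝ))) * ∑ w ∈ bdry sq m, ψ w := by
          congr 1
          · rw [Finset.sum_ite_eq' (Rset m) o ψ]
            rw [if_pos]
            have hoB : o ∈ Bfin sq m := by
              refine mem_Bfin.mpr ⟨?_, ?_⟩ <;> simp [o]
            exact hBR hoB
          · rw [Finset.sum_ite_mem, Finset.inter_eq_right.mpr hbR, Finset.mul_sum]
            refine Finset.sum_congr rfl fun w _ => by ring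
  rw [h1, h2] at h0
  linarith [h0]

/-- **Theorem (uniform harmonic measure).** For `h x = x²` and every `m ≥ 1`, the
harmonic measure of `B_m` from the origin is uniform on `∂B_m`: for every
`z ∈ ∂B_m`, every `ψ` harmonic at all vertices of `B_m ∖ ∂B_m` with `ψ z = 1` and
`ψ w = 0` for `w ∈ ∂B_m ∖ {z}` satisfies `ψ o = 1/|∂B_m|`. -/
theorem uniform_harmonic_measure (m : ℕ) (hm : 1 ≤ m) (z : V) (hz : z ∈ bdry sq m)
    (ψ : V → ℝ)
    (hharm : ∀ v ∈ Bfin sq m, v ∉ bdry sq m → HarmAt ψ v)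
    (hψz : ψ z = 1)
    (hψ0 : ∀ w ∈ bdry sq m, w ≠ z → ψ w = 0) :
    ψ o = 1 / ((bdry sq m).card : ℝ) := by
  have hm0 : (0:ℝ) < (m:ℝ) := by exact_mod_cast hm
  have hcard : ((bdry sq m).card : ℝ) = 4*(m:ℝ) := by
    have h1 := key hm (fun _ => 1) (fun v _ _ => by simp [HarmAt])
    rw [Finset.sum_const, nsmul_eq_mul, mul_one] at h1
    field_simp at h1
    linarith [h1]
  have h2 := key hm ψ hharm
  have h3 : ∑ w ∈ bdry sq m, ψ w = 1 := by
    rw [Finset.sum_eq_single z (fun w hw hne => hψ0 w hw hne)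
      (fun hz' => absurd hz hz'), hψz]
  rw [h3, mul_one] at h2
  rw [h2, hcard]

end Stmt1
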